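/- Let ρ = Σ_{j} λ_j |u_j⟩⟨u_j| and σ = Σ_{j} μ_j |w_j⟩⟨w_j| be density matrices on ℂ^D given by spectral decompositions with orthonormal eigenvector families (u_j) and (w_j). Let ε ∈ (0,1), δ = (1 − ε²)^{1/2}, and let (f_j) and (g_j) be two orthonormal families in ℂ^D such that every f_j and every g_j is orthogonal to all u_k, all w_k, and to each other (⟨f_j, g_k⟩ = 0 for all j,k). Define ũ_j = δ u_j + ε f_j and w̃_j = δ w_j + ε g_j, and the density matrices ρ̃ = Σ_j λ_j |ũ_j⟩⟨ũ_j| and σ̃ = Σ_j μ_j |w̃_j⟩⟨w̃_j|. Then for every s ∈ (0,1), tr(ρ̃^{1−s} σ̃^s) = δ⁴ · tr(ρ^{1−s} σ^s). -/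

import Mathlib

open Matrix Filter
open scoped ComplexOrder

noncomputable section

/-- A density matrix: positive semidefinite with trace 1. -/
def IsDensity {d : ℕ} (ρ : Matrix (Fin d) (Fin d) ℂ) : Prop :=
  ρ.PosSemidef ∧ ρ.trace = 1

/-- Real power of a Hermitian matrix via the spectral decomposition
(convention `(0:ℝ) ^ (0:ℝ) = 1`, as for `Real.rpow`). Returns `0` on
non-Hermitian input. -/
def mpow {ι : Type*} [Fintype ι] [DecidableEq ι] (ρ : Matrix ι ι ℂ) (s : ℝ) :
    Matrix ι ι ℂ :=
  if hρ : ρ.IsHermitian then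
    (hρ.eigenvectorUnitary : Matrix ι ι ℂ) *
      Matrix.diagonal (fun i => ((hρ.eigenvalues i ^ s : ℝ) : ℂ)) *
      star (hρ.eigenvectorUnitary : Matrix ι ι ℂ)
  else 0

/-- `inf_{s ∈ [0,1]} tr(ρ^{1-s} σ^s)`. -/
def qcbAffinity {d : ℕ} (ρ σ : Matrix (Fin d) (Fin d) ℂ) : ℝ :=
  sInf ((fun s : ℝ => (mpow ρ (1 - s) * mpow σ s).trace.re) '' Set.Icc 0 1)

/-- The binary quantum Chernoff bound. -/
def xiQCB {d : ℕ} (ρ σ : Matrix (Fin d) (Fin d) ℂ) : ℝ :=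
  -Real.log (qcbAffinity ρ σ)

/-- The multiple quantum Chernoff bound: worst case over distinct pairs. -/
def xiQCBmulti {d r : ℕ} (ρ : Fin r → Matrix (Fin d) (Fin d) ℂ) : ℝ :=
  sInf {x | ∃ i j, i ≠ j ∧ x = xiQCB (ρ i) (ρ j)}

/-- The `n`-fold Kronecker (tensor) power of a matrix. -/
def tensorPow {d m : ℕ} (A : Matrix (Fin d) (Fin m) ℂ) (n : ℕ) :
    Matrix (Fin n → Fin d) (Fin n → Fin m) ℂ :=
  fun x y => ∏ k, A (x k) (y k)

/-- A POVM (quantum detector) with `r` outcomes. -/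
def IsPOVM {ι : Type*} [Fintype ι] [DecidableEq ι] {r : ℕ}
    (E : Fin r → Matrix ι ι ℂ) : Prop :=
  (∀ i, (E i).PosSemidef) ∧ ∑ i, E i = 1

end

open Polynomial

lemma vmv_mul {D : ℕ} (a b c d : Fin D → ℂ) :
    Matrix.vecMulVec a b * Matrix.vecMulVec c d = (b ⬝ᵥ c) • Matrix.vecMulVec a d := by
  ext i j
  simp only [Matrix.mul_apply, Matrix.vecMulVec_apply, Matrix.smul_apply, dotProduct,
    Finset.sum_mul, smul_eq_mul]
  exact Finset.sum_congr rfl fun k _ => by ring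

lemma vmv_herm {D : ℕ} (a : Fin D → ℂ) :
    (Matrix.vecMulVec a (star a)).conjTranspose = Matrix.vecMulVec a (star a) := by
  ext i j
  simp [Matrix.conjTranspose_apply, Matrix.vecMulVec_apply, mul_comm]

lemma aeval_unitary_conj {ι : Type*} [Fintype ι] [DecidableEq ι]
    (U : Matrix ι ι ℂ) (hU : U ∈ Matrix.unitaryGroup ι ℂ) (d : ι → ℂ) (q : Polynomial ℂ) :
    Polynomial.aeval (U * Matrix.diagonal d * star U) q
      = U * Matrix.diagonal (fun i => q.eval (d i)) * star U := by
  have h1 : U * star U = 1 := Matrix.mem_unitaryGroup_iff.mp hU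
  have h2 : star U * U = 1 := Matrix.mem_unitaryGroup_iff'.mp hU
  induction q using Polynomial.induction_on with
  | C a =>
      simp only [aeval_C, eval_C]
      have : Matrix.diagonal (fun _ : ι => a) = algebraMap ℂ (Matrix ι ι ℂ) a := by
        simp [Matrix.algebraMap_eq_diagonal]
      rw [this, ← Algebra.commutes a U, mul_assoc, h1, mul_one]
  | add p q hp hq =>
      simp only [map_add, hp, hq, eval_add, ← Matrix.diagonal_add]
      rw [Matrix.mul_add, Matrix.add_mul]
  | monomial n a ih =>
      have : (C a : ℂ[X]) * X ^ (n + 1) = C a * X ^ n * X := by ring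
      rw [this, _root_.map_mul, ih, aeval_X]
      rw [show U * Matrix.diagonal (fun i => eval (d i) (C a * X ^ n)) * star U *
            (U * Matrix.diagonal d * star U)
          = U * (Matrix.diagonal (fun i => eval (d i) (C a * X ^ n)) * ((star U * U) *
            Matrix.diagonal d)) * star U by noncomm_ring]
      rw [h2, one_mul, Matrix.diagonal_mul_diagonal]
      congr 2
      funext i
      simp [eval_mul, eval_pow, pow_succ, mul_assoc]

lemma aeval_mul_proj {D : ℕ} (A P : Matrix (Fin D) (Fin D) ℂ) (c : ℂ)
    (hAP : A * P = c • P) (h : Polynomial ℂ) :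
    Polynomial.aeval A h * P = h.eval c • P := by
  induction h using Polynomial.induction_on with
  | C a =>
      simp only [aeval_C, eval_C, Algebra.algebraMap_eq_smul_one, smul_mul_assoc, one_mul]
  | add p q hp hq => simp [map_add, add_mul, hp, hq, eval_add, add_smul]
  | monomial n a ih =>
      have h1 : (C a : ℂ[X]) * X ^ (n + 1) = C a * X ^ n * X := by ring
      rw [h1, _root_.map_mul, aeval_X, mul_assoc, hAP, Matrix.mul_smul, ih, smul_smul]
      congr 1
      simp only [eval_mul, eval_pow, eval_C, eval_X]
      ring

lemma mpow_eq_sum {D m : ℕ} (v : Fin m → Fin D → ℂ) (c : Fin m → ℝ)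
    (hON : ∀ j k, star (v j) ⬝ᵥ v k = if j = k then 1 else 0)
    (A : Matrix (Fin D) (Fin D) ℂ)
    (hA : A = ∑ j, (c j : ℂ) • Matrix.vecMulVec (v j) (star (v j)))
    (r : ℝ) (hr : 0 < r) :
    mpow A r = ∑ j, ((c j ^ r : ℝ) : ℂ) • Matrix.vecMulVec (v j) (star (v j)) := by
  classical
  have hH : A.IsHermitian := by
    rw [Matrix.IsHermitian, hA, Matrix.conjTranspose_sum]
    refine Finset.sum_congr rfl fun j _ => ?_
    rw [Matrix.conjTranspose_smul, vmv_herm]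
    congr 1
    simp [Complex.star_def, Complex.conj_ofReal]
  set S : Finset ℝ := (Finset.univ.image hH.eigenvalues ∪ Finset.univ.image c) ∪ {0} with hS
  set p : Polynomial ℝ := Lagrange.interpolate S id (fun x => x ^ r) with hpdef
  have hp : ∀ x ∈ S, p.eval x = x ^ r := fun x hx => by
    simpa [hpdef] using Lagrange.eval_interpolate_at_node (fun x => x ^ r) (Set.injOn_id _) hx
  set q : Polynomial ℂ := p.map (algebraMap ℝ ℂ) with hqdef
  have hq : ∀ x ∈ S, q.eval (x : ℂ) = ((x ^ r : ℝ) : ℂ) := by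
    intro x hx
    have : ((x : ℂ)) = algebraMap ℝ ℂ x := rfl
    rw [hqdef, eval_map, this, Polynomial.eval₂_at_apply, hp x hx]
    rfl
  have hq0 : q.coeff 0 = 0 := by
    have h0 : (0:ℝ) ∈ S := by simp [hS]
    have := hq 0 h0
    rw [Polynomial.coeff_zero_eq_eval_zero]
    simpa [Real.zero_rpow hr.ne'] using this
  have hA2 : Polynomial.aeval A q = mpow A r := by
    rw [mpow, dif_pos hH]
    conv_lhs => rw [hH.spectral_theorem, Unitary.conjStarAlgAut_apply]
    rw [aeval_unitary_conj _ hH.eigenvectorUnitary.2]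
    have hdiag : (fun i => Polynomial.eval ((RCLike.ofReal ∘ hH.eigenvalues) i) q)
        = fun i => ((hH.eigenvalues i ^ r : ℝ) : ℂ) := by
      funext i
      have hmem : hH.eigenvalues i ∈ S := by
        simp only [hS, Finset.mem_union, Finset.mem_image, Finset.mem_singleton]
        exact Or.inl (Or.inl ⟨i, Finset.mem_univ i, rfl⟩)
      exact hq _ hmem
    rw [hdiag]
  have hP : ∀ j, A * Matrix.vecMulVec (v j) (star (v j))
      = (c j : ℂ) • Matrix.vecMulVec (v j) (star (v j)) := by
    intro j
    rw [hA, Finset.sum_mul]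
    rw [Finset.sum_eq_single j]
    · rw [smul_mul_assoc, vmv_mul, hON j j, if_pos rfl, one_smul]
    · intro k _ hk
      rw [smul_mul_assoc, vmv_mul, hON k j, if_neg hk, zero_smul, smul_zero]
    · intro h; exact absurd (Finset.mem_univ j) h
  have hA3 : Polynomial.aeval A q
      = ∑ j, ((c j ^ r : ℝ) : ℂ) • Matrix.vecMulVec (v j) (star (v j)) := by
    conv_lhs => rw [← q.divX_mul_X_add]
    rw [map_add, _root_.map_mul, aeval_X, hq0, Polynomial.C_0]
    simp only [map_zero, add_zero]
    nth_rewrite 2 [hA]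
    rw [Finset.mul_sum]
    refine Finset.sum_congr rfl fun j _ => ?_
    rw [Matrix.mul_smul, aeval_mul_proj A _ _ (hP j), smul_smul]
    congr 1
    have hj : (c j : ℝ) ∈ S := by simp [hS]
    have := hq (c j) hj
    have heval : q.eval ((c j : ℝ) : ℂ)
        = (q.divX).eval ((c j : ℝ) : ℂ) * ((c j : ℝ) : ℂ) + q.coeff 0 := by
      conv_lhs => rw [← q.divX_mul_X_add]
      simp [eval_add, eval_mul, eval_X, eval_C]
    rw [hq0, add_zero] at heval
    rw [mul_comm, ← heval, this]
  rw [← hA2, hA3]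

lemma trace_vmv {D : ℕ} (a b : Fin D → ℂ) :
    (Matrix.vecMulVec a b).trace = b ⬝ᵥ a := by
  simp [Matrix.trace, Matrix.diag, Matrix.vecMulVec_apply, dotProduct, mul_comm]

lemma dot_flip {D : ℕ} (a b : Fin D → ℂ) :
    star a ⬝ᵥ b = star (star b ⬝ᵥ a) := by
  simp only [dotProduct, star_sum, Pi.star_apply, star_mul']
  exact Finset.sum_congr rfl fun k _ => by simp [mul_comm]

lemma dot_expand {D : ℕ} (α β : ℝ) (a b x y : Fin D → ℂ) :
    star ((α:ℂ) • a + (β:ℂ) • b) ⬝ᵥ ((α:ℂ) • x + (β:ℂ) • y)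
      = (α:ℂ) * (α:ℂ) * (star a ⬝ᵥ x) + (α:ℂ) * (β:ℂ) * (star a ⬝ᵥ y)
        + (β:ℂ) * (α:ℂ) * (star b ⬝ᵥ x) + (β:ℂ) * (β:ℂ) * (star b ⬝ᵥ y) := by
  simp only [star_add, star_smul, add_dotProduct, dotProduct_add,
    smul_dotProduct, dotProduct_smul, Complex.star_def, Complex.conj_ofReal,
    smul_eq_mul]
  ring

lemma trace_mix {D m : ℕ} (a b : Fin m → ℂ) (x y : Fin m → Fin D → ℂ) :
    ((∑ j, a j • Matrix.vecMulVec (x j) (star (x j)))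
      * (∑ k, b k • Matrix.vecMulVec (y k) (star (y k)))).trace
    = ∑ j, ∑ k, a j * b k * ((star (x j) ⬝ᵥ y k) * (star (y k) ⬝ᵥ x j)) := by
  rw [Finset.sum_mul_sum, Matrix.trace_sum]
  refine Finset.sum_congr rfl fun j _ => ?_
  rw [Matrix.trace_sum]
  refine Finset.sum_congr rfl fun k _ => ?_
  rw [smul_mul_assoc, Matrix.mul_smul, vmv_mul, Matrix.trace_smul, Matrix.trace_smul,
    Matrix.trace_smul, trace_vmv]
  simp only [smul_eq_mul]
  ring


/-- trace invariance under the ε-perturbation: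
perturbing the eigenvectors of `ρ` and `σ` into fresh orthogonal directions,
`ũ_j = δ u_j + ε f_j` and `w̃_j = δ w_j + ε g_j` with `δ = (1-ε²)^{1/2}`,
rescales the Chernoff trace quantity by `δ⁴`. -/
theorem perturbed_chernoff_trace {D m : ℕ}
    (u w f g : Fin m → (Fin D → ℂ))
    (lam mu : Fin m → ℝ)
    (hlam0 : ∀ j, 0 ≤ lam j) (hlam1 : ∑ j, lam j = 1)
    (hmu0 : ∀ j, 0 ≤ mu j) (hmu1 : ∑ j, mu j = 1)
    (huON : ∀ j k, star (u j) ⬝ᵥ u k = if j = k then 1 else 0)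
    (hwON : ∀ j k, star (w j) ⬝ᵥ w k = if j = k then 1 else 0)
    (hfON : ∀ j k, star (f j) ⬝ᵥ f k = if j = k then 1 else 0)
    (hgON : ∀ j k, star (g j) ⬝ᵥ g k = if j = k then 1 else 0)
    (hfu : ∀ j k, star (f j) ⬝ᵥ u k = 0)
    (hfw : ∀ j k, star (f j) ⬝ᵥ w k = 0)
    (hgu : ∀ j k, star (g j) ⬝ᵥ u k = 0)
    (hgw : ∀ j k, star (g j) ⬝ᵥ w k = 0)
    (hfg : ∀ j k, star (f j) ⬝ᵥ g k = 0)
    (ε δ : ℝ) (hε : ε ∈ Set.Ioo (0 : ℝ) 1) (hδ : δ = Real.sqrt (1 - ε ^ 2))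
    (ρ σ ρt σt : Matrix (Fin D) (Fin D) ℂ)
    (hρ : ρ = ∑ j, (lam j : ℂ) • Matrix.vecMulVec (u j) (star (u j)))
    (hσ : σ = ∑ j, (mu j : ℂ) • Matrix.vecMulVec (w j) (star (w j)))
    (hρt : ρt = ∑ j, (lam j : ℂ) •
      Matrix.vecMulVec ((δ : ℂ) • u j + (ε : ℂ) • f j)
        (star ((δ : ℂ) • u j + (ε : ℂ) • f j)))
    (hσt : σt = ∑ j, (mu j : ℂ) •
      Matrix.vecMulVec ((δ : ℂ) • w j + (ε : ℂ) • g j)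
        (star ((δ : ℂ) • w j + (ε : ℂ) • g j)))
    (s : ℝ) (hs : s ∈ Set.Ioo (0 : ℝ) 1) :
    (mpow ρt (1 - s) * mpow σt s).trace =
      ((δ ^ 4 : ℝ) : ℂ) * (mpow ρ (1 - s) * mpow σ s).trace := by
  have hs1 : (0:ℝ) < 1 - s := by linarith [hs.2]
  have hs0 : (0:ℝ) < s := hs.1
  have hδ2 : δ ^ 2 = 1 - ε ^ 2 := by
    rw [hδ]; exact Real.sq_sqrt (by nlinarith [hε.2.le, hε.1.le])
  have hδε : (δ:ℂ) * δ + (ε:ℂ) * ε = 1 := by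
    have hR : δ * δ + ε * ε = 1 := by nlinarith [hδ2]
    exact_mod_cast hR
  have huf : ∀ j k, star (u j) ⬝ᵥ f k = 0 := fun j k => by rw [dot_flip, hfu]; simp
  have hug : ∀ j k, star (u j) ⬝ᵥ g k = 0 := fun j k => by rw [dot_flip, hgu]; simp
  have hwf : ∀ j k, star (w j) ⬝ᵥ f k = 0 := fun j k => by rw [dot_flip, hfw]; simp
  have hwg : ∀ j k, star (w j) ⬝ᵥ g k = 0 := fun j k => by rw [dot_flip, hgw]; simp
  have hgf : ∀ j k, star (g j) ⬝ᵥ f k = 0 := fun j k => by rw [dot_flip, hfg]; simp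
  have hutON : ∀ j k, star ((δ:ℂ) • u j + (ε:ℂ) • f j) ⬝ᵥ ((δ:ℂ) • u k + (ε:ℂ) • f k)
      = if j = k then 1 else 0 := by
    intro j k
    rw [dot_expand, huON, huf, hfu, hfON]
    by_cases h : j = k <;> simp [h, hδε]
  have hwtON : ∀ j k, star ((δ:ℂ) • w j + (ε:ℂ) • g j) ⬝ᵥ ((δ:ℂ) • w k + (ε:ℂ) • g k)
      = if j = k then 1 else 0 := by
    intro j k
    rw [dot_expand, hwON, hwg, hgw, hgON]
    by_cases h : j = k <;> simp [h, hδε]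
  have h1 := mpow_eq_sum (fun j => (δ:ℂ) • u j + (ε:ℂ) • f j) lam hutON ρt hρt (1 - s) hs1
  have h2 := mpow_eq_sum (fun j => (δ:ℂ) • w j + (ε:ℂ) • g j) mu hwtON σt hσt s hs0
  have h3 := mpow_eq_sum u lam huON ρ hρ (1 - s) hs1
  have h4 := mpow_eq_sum w mu hwON σ hσ s hs0
  rw [h1, h2, trace_mix, h3, h4, trace_mix, Finset.mul_sum]
  refine Finset.sum_congr rfl fun j _ => ?_
  rw [Finset.mul_sum]
  refine Finset.sum_congr rfl fun k _ => ?_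
  have e1 : star ((δ:ℂ) • u j + (ε:ℂ) • f j) ⬝ᵥ ((δ:ℂ) • w k + (ε:ℂ) • g k)
      = (δ:ℂ) * (δ:ℂ) * (star (u j) ⬝ᵥ w k) := by
    rw [dot_expand, hug, hfw, hfg]; ring
  have e2 : star ((δ:ℂ) • w k + (ε:ℂ) • g k) ⬝ᵥ ((δ:ℂ) • u j + (ε:ℂ) • f j)
      = (δ:ℂ) * (δ:ℂ) * (star (w k) ⬝ᵥ u j) := by
    rw [dot_expand, hwf, hgu, hgf]; ring
  rw [e1, e2]
  push_cast
  ring
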